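/- Consider the function h⋆(x,ξ) := (1/2)·x₁²/h₀(x,ξ) on ℝ⁴ \ {0}, with h₀ = (|x|²+|ξ|²)/2 and (x,ξ) = (x₁,x₂,ξ₁,ξ₂). Then h⋆ is positively homogeneous of degree 0, and the function a(x,ξ) := −x₁ξ₁ satisfies the Poisson bracket identity {h⋆, a} = ξ₁²x₁²/(2h₀²) + (x₁²/h₀)(1 − x₁²/(2h₀)) ≥ 2h⋆(1 − h⋆), which is strictly positive on each level set h⋆⁻¹(e₀) with e₀ ∈ (0,1). In particular a is an escape function for h⋆ at every e₀ ∈ (0,1). -/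

import Mathlib

noncomputable section

abbrev E4 := EuclideanSpace ℝ (Fin 4)

def Jmap (z : E4) : E4 := (WithLp.equiv 2 (Fin 4 → ℝ)).symm ![z 2, z 3, -z 0, -z 1]

/-- Hamiltonian vector field `X_f = J∇f`. -/
def hamVF (f : E4 → ℝ) (z : E4) : E4 := Jmap (gradient f z)

/-- Poisson bracket `{f, g} = ∇_ξ f · ∇ₓ g − ∇ₓ f · ∇_ξ g = dg[X_f]`. -/
def pb (f g : E4 → ℝ) (z : E4) : ℝ := inner ℝ (gradient g z) (hamVF f z)

/-- `h₀(z) = |z|²/2`. -/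
def h0 (z : E4) : ℝ := ‖z‖ ^ 2 / 2

/-- The model Hamiltonian `h⋆(x,ξ) = (1/2) x₁²/h₀(x,ξ)`, coordinates `(x₁,x₂,ξ₁,ξ₂)`. -/
def hstar (z : E4) : ℝ := (1 / 2) * (z 0) ^ 2 / h0 z

/-- The escape function `a(x,ξ) = −x₁ξ₁`. -/
def aesc (z : E4) : ℝ := -(z 0 * z 2)

lemma inner_gradient (f : E4 → ℝ) (z y : E4) :
    (inner ℝ (gradient f z) y : ℝ) = fderiv ℝ f z y := by
  rw [gradient]; exact InnerProductSpace.toDual_symm_apply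

lemma gradient_apply (f : E4 → ℝ) (z : E4) (i : Fin 4) :
    gradient f z i = fderiv ℝ f z (EuclideanSpace.single i 1) := by
  have h := inner_gradient f z (EuclideanSpace.single i (1:ℝ))
  rw [EuclideanSpace.inner_single_right] at h
  simpa using h

lemma h0_pos (z : E4) (hz : z ≠ 0) : 0 < h0 z := by
  have : 0 < ‖z‖ := norm_pos_iff.mpr hz
  simp only [h0]; positivity

lemma hasFDerivAt_h0 (z : E4) : HasFDerivAt h0 (innerSL ℝ z) z := by
  have h := ((hasFDerivAt_id z).inner ℝ (hasFDerivAt_id z)).const_mul (1/2 : ℝ)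
  have he : h0 = fun z : E4 => (1/2 : ℝ) * (inner ℝ z z : ℝ) := by
    funext w; rw [h0, real_inner_self_eq_norm_sq]; ring
  rw [he]
  refine h.congr_fderiv ?_
  ext v
  simp [fderivInnerCLM_apply, real_inner_comm]
  have hc : ∑ x : Fin 4, v x * z x = ∑ x : Fin 4, z x * v x := by
    exact Finset.sum_congr rfl fun x _ => mul_comm _ _
  ring

lemma fderiv_hstar_apply (z : E4) (hz : z ≠ 0) (v : E4) :
    fderiv ℝ hstar z v
      = (z 0 * v 0 * h0 z - (1/2) * (z 0)^2 * (inner ℝ z v : ℝ)) / (h0 z)^2 := by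
  have hne : h0 z ≠ 0 := (h0_pos z hz).ne'
  have h1 : HasFDerivAt (fun z : E4 => z 0) (EuclideanSpace.proj (𝕜 := ℝ) (0 : Fin 4)) z := by
    exact (EuclideanSpace.proj (𝕜 := ℝ) (0 : Fin 4) : E4 →L[ℝ] ℝ).hasFDerivAt
  have h2 := (h1.mul h1).const_mul (1/2 : ℝ)
  have hinv := (hasDerivAt_inv hne).comp_hasFDerivAt z (hasFDerivAt_h0 z)
  have hd := h2.mul (hinv.congr_of_eventuallyEq (Filter.Eventually.of_forall fun w => rfl) : HasFDerivAt (fun w : E4 => (h0 w)⁻¹) _ z)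
  have : hstar = fun z : E4 => (1/2) * (z 0 * z 0) * (h0 z)⁻¹ := by
    funext w; rw [hstar]; ring
  rw [this, show (fun z : E4 => (1/2) * (z 0 * z 0) * (h0 z)⁻¹) = ((fun y => 1/2 * ((fun z : E4 => z 0) * fun (z : E4) => z 0) y) * fun w => (h0 w)⁻¹) from rfl, hd.fderiv]
  simp [ContinuousLinearMap.smul_apply, smul_eq_mul]
  field_simp
  ring

lemma fderiv_aesc_apply (z v : E4) :
    fderiv ℝ aesc z v = -(v 0 * z 2 + z 0 * v 2) := by
  have h1 : HasFDerivAt (fun z : E4 => z 0) (EuclideanSpace.proj (𝕜 := ℝ) (0 : Fin 4)) z := by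
    exact (EuclideanSpace.proj (𝕜 := ℝ) (0 : Fin 4) : E4 →L[ℝ] ℝ).hasFDerivAt
  have h2 : HasFDerivAt (fun z : E4 => z 2) (EuclideanSpace.proj (𝕜 := ℝ) (2 : Fin 4)) z := by
    exact (EuclideanSpace.proj (𝕜 := ℝ) (2 : Fin 4) : E4 →L[ℝ] ℝ).hasFDerivAt
  have hd := (h1.mul h2).neg
  have : aesc = fun z : E4 => -(z 0 * z 2) := rfl
  rw [this, show (fun z : E4 => -(z 0 * z 2)) = -((fun z : E4 => z 0) * fun z => z 2) from rfl, hd.fderiv]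
  simp [smul_eq_mul]
  ring

lemma Jmap_apply (g : E4) : (Jmap g) 0 = g 2 ∧ (Jmap g) 2 = -(g 0) := by
  constructor <;> rfl

lemma pb_eq (z : E4) (hz : z ≠ 0) :
    pb hstar aesc z
      = ((1/2) * (z 0)^2 * (z 2)^2 + (z 0)^2 * h0 z - (1/2) * (z 0)^4) / (h0 z)^2 := by
  have hne : h0 z ≠ 0 := (h0_pos z hz).ne'
  have hw0 : (hamVF hstar z) 0 = gradient hstar z 2 := rfl
  have hw2 : (hamVF hstar z) 2 = -(gradient hstar z 0) := rfl
  have hg0 : gradient hstar z 0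
      = (z 0 * 1 * h0 z - (1/2) * (z 0)^2 * z 0) / (h0 z)^2 := by
    rw [gradient_apply, fderiv_hstar_apply z hz]
    rw [EuclideanSpace.inner_single_right]
    norm_num [EuclideanSpace.single_apply, show ((0:Fin 4) = 2) ↔ False from by decide, show ((2:Fin 4) = 0) ↔ False from by decide]
  have hg2 : gradient hstar z 2
      = (z 0 * 0 * h0 z - (1/2) * (z 0)^2 * z 2) / (h0 z)^2 := by
    rw [gradient_apply, fderiv_hstar_apply z hz]
    rw [EuclideanSpace.inner_single_right]
    norm_num [EuclideanSpace.single_apply, show ((0:Fin 4) = 2) ↔ False from by decide, show ((2:Fin 4) = 0) ↔ False from by decide]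
  have : pb hstar aesc z = fderiv ℝ aesc z (hamVF hstar z) := inner_gradient _ _ _
  rw [this, fderiv_aesc_apply, hw0, hw2, hg0, hg2]
  field_simp
  ring

/-- **The model example.** `h⋆ = x₁²/(2h₀)` is positively homogeneous of degree 0, and
`a = −x₁ξ₁` (homogeneous of degree 2) satisfies
`{h⋆,a} = ξ₁²x₁²/(2h₀²) + (x₁²/h₀)(1 − x₁²/(2h₀)) ≥ 2h⋆(1 − h⋆)`,
which is strictly positive on every level set `h⋆⁻¹(e₀)`, `e₀ ∈ (0,1)`. Hence `a` is an
escape function for `h⋆` at every `e₀ ∈ (0,1)`. -/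
theorem hstar_escape_function :
    (∀ (lam : ℝ), 0 < lam → ∀ z : E4, z ≠ 0 → hstar (lam • z) = hstar z)
    ∧ (∀ z : E4, z ≠ 0 →
        pb hstar aesc z
          = (z 2) ^ 2 * (z 0) ^ 2 / (2 * (h0 z) ^ 2)
            + ((z 0) ^ 2 / h0 z) * (1 - (z 0) ^ 2 / (2 * h0 z)))
    ∧ (∀ z : E4, z ≠ 0 → 2 * hstar z * (1 - hstar z) ≤ pb hstar aesc z)
    ∧ (∀ e₀ : ℝ, e₀ ∈ Set.Ioo (0 : ℝ) 1 →
        ∀ z : E4, z ≠ 0 → hstar z = e₀ → 0 < pb hstar aesc z) := by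
  have hpb : ∀ z : E4, z ≠ 0 →
      pb hstar aesc z
        = (z 2) ^ 2 * (z 0) ^ 2 / (2 * (h0 z) ^ 2)
          + ((z 0) ^ 2 / h0 z) * (1 - (z 0) ^ 2 / (2 * h0 z)) := by
    intro z hz
    have hne : h0 z ≠ 0 := (h0_pos z hz).ne'
    rw [pb_eq z hz]
    field_simp
    ring
  have hkey : ∀ z : E4, z ≠ 0 → 2 * hstar z * (1 - hstar z) ≤ pb hstar aesc z := by
    intro z hz
    have hpos : 0 < h0 z := h0_pos z hz
    rw [hpb z hz]
    have h1 : 2 * hstar z * (1 - hstar z)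
        = ((z 0) ^ 2 / h0 z) * (1 - (z 0) ^ 2 / (2 * h0 z)) := by
      rw [hstar]; field_simp
    rw [h1]
    have : 0 ≤ (z 2) ^ 2 * (z 0) ^ 2 / (2 * (h0 z) ^ 2) := by positivity
    linarith
  refine ⟨?_, hpb, hkey, ?_⟩
  · intro lam hlam z hz
    have hne : h0 z ≠ 0 := (h0_pos z hz).ne'
    have hl : lam ≠ 0 := hlam.ne'
    have hsz : (lam • z) 0 = lam * z 0 := rfl
    have hh : h0 (lam • z) = lam ^ 2 * h0 z := by
      simp only [h0, norm_smul, Real.norm_eq_abs, mul_pow, sq_abs]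
      ring
    rw [hstar, hstar, hsz, hh]
    field_simp
  · intro e₀ he z hz hlev
    have h := hkey z hz
    calc (0:ℝ) < 2 * e₀ * (1 - e₀) := by nlinarith [he.1, he.2]
    _ = 2 * hstar z * (1 - hstar z) := by rw [hlev]
    _ ≤ pb hstar aesc z := h
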